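/- Fix integers ℓ ≥ 1, N_s ≥ 1, L = ℓN_s, parameters η, ξ₁,…,ξ_{N_s} ∈ ℂ with q = e^η satisfying q^{2m} ≠ 1 for 1 ≤ m ≤ ℓ, a weight function g : {0,…,ℓ} → ℂ∖{0}, a site 1 ≤ k ≤ N_s, and integers 0 ≤ i,j ≤ ℓ. Let Ê_k^{i,j(ℓ p)} be the operator on (ℂ²)^{⊗L} acting as (g(j)/g(i)) ||ℓ,i⟩⟨ℓ,j|| on the k-th block of ℓ factors and as identity elsewhere. Then for every fixed A ⊆ {1,…,ℓ} with |A| = i: Ê_k^{i,j(ℓ p)} = N̂_{i,j} · e^{−(i−j)Λ_k} · P^{(ℓ)}_{[k]} · Σ_{B⊆{1,…,ℓ}, |B|=j} χ_{1…L} (|1_A⟩⟨1_B| on block k) χ_{1…L}^{−1}, where Λ_k = ξ_k − (ℓ−1)η/2, N̂_{i,j} = (g(j)/g(i)) (F(ℓ,i)/F(ℓ,j)) e^{η(i(ℓ−i) − j(ℓ−j))/2} with F(ℓ,n) = [ℓ choose n]_q q^{−n(ℓ−n)}, P^{(ℓ)}_{[k]} is the spin-ℓ/2 projector P^{(ℓ)}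 acting on block k (identity elsewhere), and χ_{1…L} = ⊗_{m=1}^{L} diag(1, e^{w^{(ℓ)}_m}). Moreover the right-hand side is independent of the choice of A. -/

import Mathlib

noncomputable section

/-- The q-integer `[n]_q = (qⁿ − q⁻ⁿ)/(q − q⁻¹)`. -/
def qint (q : ℂ) (n : ℕ) : ℂ := (q ^ (n : ℤ) - q ^ (-(n : ℤ))) / (q - q⁻¹)

/-- The q-factorial `[n]_q! = ∏_{m=1}^n [m]_q`. -/
def qfact (q : ℂ) (n : ℕ) : ℂ := ∏ m ∈ Finset.range n, qint q (m + 1)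

/-- The q-binomial coefficient `[l choose n]_q`. -/
def qbinom (q : ℂ) (l n : ℕ) : ℂ := qfact q l / (qfact q (l - n) * qfact q n)
/-- Index of the standard basis of `(ℂ²)^{⊗l}`: spin configurations `{0,1}^l`. -/
abbrev SpinIdx (l : ℕ) := Fin l → Fin 2

/-- Vectors in `(ℂ²)^{⊗l}`. -/
abbrev SpinVec (l : ℕ) := SpinIdx l → ℂ

/-- Operators (matrices) on `(ℂ²)^{⊗l}`. -/
abbrev SpinOp (l : ℕ) := Matrix (SpinIdx l) (SpinIdx l) ℂ

/-- The indicator configuration of a subset `A`: down spins exactly on `A`. -/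
def indFun {l : ℕ} (A : Finset (Fin l)) : SpinIdx l := fun k => if k ∈ A then 1 else 0

/-- The standard basis vector `|1_A⟩` with down spins exactly on `A`. -/
def bvec {l : ℕ} (A : Finset (Fin l)) : SpinVec l := fun ε => if ε = indFun A then 1 else 0

/-- `Σ_{a ∈ A} a`, where the site `k : Fin l` has 1-based number `k+1 ∈ {1,…,l}`. -/
def siteSum {l : ℕ} (A : Finset (Fin l)) : ℤ := ∑ a ∈ A, ((a : ℤ) + 1)

/-- Coefficient `q^{(Σ_{a∈A} a) − i·l + i(i−1)/2}`. -/
def hwt (q : ℂ) {l : ℕ} (i : ℕ) (A : Finset (Fin l)) : ℂ :=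
  q ^ (siteSum A - (i : ℤ) * (l : ℤ) + (i : ℤ) * ((i : ℤ) - 1) / 2)

/-- The spin-`l/2` basis vector `||l,i⟩`. -/
def hv (q : ℂ) (l i : ℕ) : SpinVec l :=
  ∑ A ∈ Finset.powersetCard i (Finset.univ : Finset (Fin l)), hwt q i A • bvec A

/-- The conjugate covector `⟨l,j||` (represented by its coefficient vector; the pairing
is the bilinear transpose pairing). -/
def cv (q : ℂ) (l j : ℕ) : SpinVec l :=
  ((qbinom q l j)⁻¹ * q ^ ((j : ℤ) * ((l : ℤ) - (j : ℤ)))) •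
    ∑ B ∈ Finset.powersetCard j (Finset.univ : Finset (Fin l)), hwt q j B • bvec B

/-- The rank-one operator `|u⟩⟨v|` (transpose pairing). -/
def rankOne {l : ℕ} (u v : SpinVec l) : SpinOp l := Matrix.of fun ε ε' => u ε * v ε'

/-- The spin-`l/2` projector `P^{(l)} = Σ_{n=0}^{l} ||l,n⟩⟨l,n||`. -/
def proj (q : ℂ) (l : ℕ) : SpinOp l :=
  ∑ n ∈ Finset.range (l + 1), rankOne (hv q l n) (cv q l n)

/-- The elementary operator `e_k^{a,b}` acting on the k-th tensor factor. -/
def elem {l : ℕ} (k : Fin l) (a b : Fin 2) : SpinOp l :=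
  Matrix.of fun ε ε' => if ε k = a ∧ ε' k = b ∧ ∀ m, m ≠ k → ε m = ε' m then 1 else 0

/-- The ordered product `e_1^{e'_1,e_1} ⋯ e_l^{e'_l,e_l}`. -/
def elemProd {l : ℕ} (e' e : Fin l → Fin 2) : SpinOp l :=
  (List.ofFn fun k : Fin l => elem k (e' k) (e k)).prod

/-- The gauge matrix `⊗_s diag(1, e^{w s})`. -/
def gaugeM {S : Type*} [Fintype S] [DecidableEq S] (w : S → ℂ) :
    Matrix (S → Fin 2) (S → Fin 2) ℂ :=
  Matrix.diagonal fun ε => ∏ s, if ε s = 1 then Complex.exp (w s) else 1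
/-- Sites of the chain of `Ns` blocks of `l` spin-1/2 sites: block `b`, position `β`
(1-based site number `l·b + β + 1`; lexicographic order is the site order). -/
abbrev FSite (l Ns : ℕ) := Fin Ns × Fin l

/-- Spin configurations of the full chain `(ℂ²)^{⊗(l·Ns)}`. -/
abbrev FIdx2 (l Ns : ℕ) := FSite l Ns → Fin 2

/-- Operators on the full chain. -/
abbrev FOp (l Ns : ℕ) := Matrix (FIdx2 l Ns) (FIdx2 l Ns) ℂ

/-- Embed an operator on one block of `l` factors into the full chain (block `b`,
identity elsewhere). -/
def embed {l Ns : ℕ} (b : Fin Ns) (M : SpinOp l) : FOp l Ns :=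
  Matrix.of fun ε ε' =>
    if ∀ s : FSite l Ns, s.1 ≠ b → ε s = ε' s then
      M (fun β => ε (b, β)) (fun β => ε' (b, β)) else 0

/-- The complete `l`-string inhomogeneities `w^{(l)}_{l(b−1)+β} = ξ_b − (β−1)η`. -/
def wstring (l Ns : ℕ) (η : ℂ) (ξ : Fin Ns → ℂ) : FSite l Ns → ℂ :=
  fun s => ξ s.1 - (s.2.val : ℂ) * η

/-- The full projector `P^{(l)}_{1…L} = ⊗_{b=1}^{Ns} P^{(l)}` (one per block). -/
def projFull (q : ℂ) (l Ns : ℕ) : FOp l Ns :=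
  Matrix.of fun ε ε' => ∏ b : Fin Ns, proj q l (fun β => ε (b, β)) (fun β => ε' (b, β))

/-- The normalization `F(l,n) = [l choose n]_q q^{−n(l−n)}`. -/
def Fnorm (q : ℂ) (l n : ℕ) : ℂ := qbinom q l n * q ^ (-(n : ℤ) * ((l : ℤ) - (n : ℤ)))

/-- The normalization factor `N̂_{i,j} = (g(j)/g(i))·(F(l,i)/F(l,j))·e^{η(i(l−i)−j(l−j))/2}`. -/
def Nhat (q η : ℂ) (g : ℕ → ℂ) (l i j : ℕ) : ℂ :=
  (g j / g i) * (Fnorm q l i / Fnorm q l j) *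
    Complex.exp (η * (((i : ℂ) * ((l : ℂ) - (i : ℂ)) - (j : ℂ) * ((l : ℂ) - (j : ℂ))) / 2))

-- chunk 1: basic lemmas
lemma indFun_inj {l : ℕ} {A B : Finset (Fin l)} (h : indFun A = indFun B) : A = B := by
  ext a
  have := congrFun h a
  simp only [indFun] at this
  by_cases hA : a ∈ A <;> by_cases hB : a ∈ B <;> simp_all

lemma bvec_indFun {l : ℕ} (A B : Finset (Fin l)) :
    bvec A (indFun B) = if B = A then 1 else 0 := by
  unfold bvec
  by_cases h : B = A
  · simp [h]
  · rw [if_neg h, if_neg]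
    intro hc
    exact h (indFun_inj hc)

lemma gaugeM_mul_neg {S : Type*} [Fintype S] [DecidableEq S] (w : S → ℂ) :
    gaugeM w * gaugeM (fun s => -(w s)) = 1 := by
  unfold gaugeM
  rw [Matrix.diagonal_mul_diagonal]
  convert Matrix.diagonal_one
  rw [← Finset.prod_mul_distrib]
  apply Finset.prod_eq_one
  intro s _
  split <;> simp [← Complex.exp_add]

lemma gaugeM_inv {S : Type*} [Fintype S] [DecidableEq S] (w : S → ℂ) :
    (gaugeM w)⁻¹ = gaugeM (fun s => -(w s)) :=
  Matrix.inv_eq_right_inv (gaugeM_mul_neg w)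
lemma embed_smul {l Ns : ℕ} (b : Fin Ns) (c : ℂ) (M : SpinOp l) :
    embed b (c • M) = c • embed b M := by
  ext ε ε'
  simp only [embed, Matrix.of_apply, Matrix.smul_apply, smul_eq_mul]
  split <;> simp

lemma embed_sum {l Ns : ℕ} (b : Fin Ns) {α : Type*} (s : Finset α) (f : α → SpinOp l) :
    embed b (∑ x ∈ s, f x) = ∑ x ∈ s, embed b (f x) := by
  ext ε ε'
  simp only [embed, Matrix.of_apply, Matrix.sum_apply]
  split <;> simp

/-- Replace the block `b` of a full configuration by `τ`. -/
def setBlk {l Ns : ℕ} (b : Fin Ns) (ε : FIdx2 l Ns) (τ : SpinIdx l) : FIdx2 l Ns :=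
  fun s => if s.1 = b then τ s.2 else ε s

lemma embed_mul {l Ns : ℕ} (b : Fin Ns) (M N : SpinOp l) :
    embed b M * embed b N = embed b (M * N) := by
  ext ε ε'
  simp only [Matrix.mul_apply, embed, Matrix.of_apply]
  by_cases hC : ∀ s : FSite l Ns, s.1 ≠ b → ε s = ε' s
  · rw [if_pos hC]
    have hterm : ∀ ε'' : FIdx2 l Ns,
        (if ∀ s : FSite l Ns, s.1 ≠ b → ε s = ε'' s then
            M (fun β => ε (b, β)) (fun β => ε'' (b, β)) else 0) *
        (if ∀ s : FSite l Ns, s.1 ≠ b → ε'' s = ε' s then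
            N (fun β => ε'' (b, β)) (fun β => ε' (b, β)) else 0)
        = if ∀ s : FSite l Ns, s.1 ≠ b → ε'' s = ε s then
            M (fun β => ε (b, β)) (fun β => ε'' (b, β)) *
            N (fun β => ε'' (b, β)) (fun β => ε' (b, β)) else 0 := by
      intro ε''
      by_cases h1 : ∀ s : FSite l Ns, s.1 ≠ b → ε'' s = ε s
      · rw [if_pos h1, if_pos fun s hs => (h1 s hs).symm,
          if_pos fun s hs => (h1 s hs).trans (hC s hs)]
      · rw [if_neg h1, if_neg fun h => h1 fun s hs => (h s hs).symm, zero_mul]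
    rw [Finset.sum_congr rfl fun ε'' _ => hterm ε'', Finset.sum_ite, Finset.sum_const_zero,
      add_zero]
    refine Finset.sum_nbij' (fun ε'' => fun β => ε'' (b, β)) (setBlk b ε)
      (fun _ _ => Finset.mem_univ _) ?_ ?_ ?_ ?_
    · intro τ _
      simp only [Finset.mem_filter, Finset.mem_univ, true_and]
      intro s hs
      simp [setBlk, hs]
    · intro ε'' hε''
      simp only [Finset.mem_filter, Finset.mem_univ, true_and] at hε''
      funext s
      by_cases hs : s.1 = b
      · simp only [setBlk, hs, if_pos]
        congr 1
        exact (Prod.ext hs.symm rfl : (b, s.2) = s) ▸ rfl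
      · simp [setBlk, hs, hε'' s hs]
    · intro τ _
      funext β
      simp [setBlk]
    · intro ε'' _
      rfl
  · rw [if_neg hC]
    apply Finset.sum_eq_zero
    intro ε'' _
    by_cases h1 : ∀ s : FSite l Ns, s.1 ≠ b → ε s = ε'' s
    · rw [if_neg (fun h2 : ∀ s : FSite l Ns, s.1 ≠ b → ε'' s = ε' s =>
          hC fun s hs => (h1 s hs).trans (h2 s hs)), mul_zero]
    · rw [if_neg h1, zero_mul]
lemma indFun_eq_one_iff {l : ℕ} (A : Finset (Fin l)) (β : Fin l) :
    indFun A β = 1 ↔ β ∈ A := by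
  unfold indFun; split <;> simp_all

lemma prod_gauge_block {l : ℕ} (A : Finset (Fin l)) (v : Fin l → ℂ) :
    (∏ β : Fin l, if indFun A β = 1 then Complex.exp (v β) else 1)
      = Complex.exp (∑ a ∈ A, v a) := by
  rw [Complex.exp_sum]
  rw [Finset.prod_congr rfl (fun β _ => by rw [if_congr (indFun_eq_one_iff A β) rfl rfl])]
  rw [Finset.prod_ite_mem Finset.univ A (fun β => Complex.exp (v β)), Finset.univ_inter]

lemma gauge_conj {l Ns : ℕ} (k : Fin Ns) (w : FSite l Ns → ℂ) (A B : Finset (Fin l)) :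
    gaugeM w * embed k (rankOne (bvec A) (bvec B)) * (gaugeM w)⁻¹
      = Complex.exp ((∑ a ∈ A, w (k, a)) - ∑ b ∈ B, w (k, b)) •
          embed k (rankOne (bvec A) (bvec B)) := by
  rw [gaugeM_inv]
  ext ε ε'
  simp only [gaugeM, Matrix.diagonal_mul, Matrix.mul_diagonal, Matrix.smul_apply,
    smul_eq_mul, embed, Matrix.of_apply]
  by_cases hC : ∀ s : FSite l Ns, s.1 ≠ k → ε s = ε' s
  · rw [if_pos hC]
    simp only [rankOne, Matrix.of_apply, bvec]
    by_cases hA : (fun β => ε (k, β)) = indFun A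
    · by_cases hB : (fun β => ε' (k, β)) = indFun B
      · rw [if_pos hA, if_pos hB]
        have key : (∏ s : FSite l Ns, if ε s = 1 then Complex.exp (w s) else 1) *
            (∏ s : FSite l Ns, if ε' s = 1 then Complex.exp (-(w s)) else 1)
            = Complex.exp ((∑ a ∈ A, w (k, a)) - ∑ b ∈ B, w (k, b)) := by
          rw [← Finset.prod_mul_distrib]
          rw [Fintype.prod_prod_type]
          rw [Finset.prod_eq_single_of_mem k (Finset.mem_univ k) ?_]
          · have hεA : ∀ β, ε (k, β) = indFun A β := fun β => congrFun hA β
            have hεB : ∀ β, ε' (k, β) = indFun B β := fun β => congrFun hB β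
            calc (∏ β : Fin l, (if ε (k, β) = 1 then Complex.exp (w (k, β)) else 1) *
                    (if ε' (k, β) = 1 then Complex.exp (-w (k, β)) else 1))
                = (∏ β : Fin l, if indFun A β = 1 then Complex.exp (w (k, β)) else 1) *
                  (∏ β : Fin l, if indFun B β = 1 then Complex.exp (-w (k, β)) else 1) := by
                  rw [← Finset.prod_mul_distrib]
                  exact Finset.prod_congr rfl fun β _ => by rw [hεA β, hεB β]
              _ = Complex.exp ((∑ a ∈ A, w (k, a)) - ∑ b ∈ B, w (k, b)) := by
                  rw [prod_gauge_block A (fun β => w (k, β)),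
                    prod_gauge_block B (fun β => -w (k, β)), ← Complex.exp_add]
                  congr 1
                  simp only [Finset.sum_neg_distrib]
                  ring
          · intro b _ hb
            apply Finset.prod_eq_one
            intro β _
            rw [← hC (b, β) hb]
            split <;> simp [← Complex.exp_add]
        simp only [mul_one]
        exact key
      · rw [if_neg hB]; ring
    · rw [if_neg hA]; ring
  · rw [if_neg hC]; ring
lemma rankOne_smul_left {l : ℕ} (c : ℂ) (u v : SpinVec l) :
    rankOne (c • u) v = c • rankOne u v := by
  ext ε ε'; simp [rankOne, mul_assoc]

lemma rankOne_smul_right {l : ℕ} (c : ℂ) (u v : SpinVec l) :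
    rankOne u (c • v) = c • rankOne u v := by
  ext ε ε'; simp [rankOne]; ring

lemma rankOne_sum_right {l : ℕ} {α : Type*} (u : SpinVec l) (s : Finset α)
    (f : α → SpinVec l) :
    rankOne u (∑ x ∈ s, f x) = ∑ x ∈ s, rankOne u (f x) := by
  ext ε ε'; simp [rankOne, Finset.mul_sum, Matrix.sum_apply]

lemma mul_rankOne_bvec {l : ℕ} (M : SpinOp l) (A : Finset (Fin l)) (v : SpinVec l) :
    M * rankOne (bvec A) v = rankOne (fun ε => M ε (indFun A)) v := by
  ext ε ε'
  simp only [Matrix.mul_apply, rankOne, Matrix.of_apply, bvec]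
  simp [mul_ite, ite_mul, Finset.sum_ite_eq', mul_assoc]

lemma sum_hwt_bvec_at (q : ℂ) {l : ℕ} (n : ℕ) (A : Finset (Fin l)) :
    (∑ B ∈ Finset.powersetCard n (Finset.univ : Finset (Fin l)), hwt q n B • bvec B)
        (indFun A) = if A.card = n then hwt q n A else 0 := by
  rw [Finset.sum_apply]
  rw [Finset.sum_congr rfl fun B _ => by rw [Pi.smul_apply, bvec_indFun, smul_eq_mul]]
  simp only [mul_ite, mul_one, mul_zero]
  rw [Finset.sum_ite_eq (Finset.powersetCard n (Finset.univ : Finset (Fin l))) A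
    (fun B => hwt q n B)]
  simp [Finset.mem_powersetCard_univ]

lemma cv_indFun (q : ℂ) {l : ℕ} (n : ℕ) (A : Finset (Fin l)) :
    cv q l n (indFun A) = if A.card = n then
      (qbinom q l n)⁻¹ * q ^ ((n : ℤ) * ((l : ℤ) - (n : ℤ))) * hwt q n A else 0 := by
  unfold cv
  rw [Pi.smul_apply, sum_hwt_bvec_at, smul_eq_mul]
  split <;> ring

lemma proj_col (q : ℂ) {l : ℕ} (i : ℕ) (hi : i ≤ l) (A : Finset (Fin l))
    (hA : A.card = i) :
    (fun ε => proj q l ε (indFun A)) =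
      ((qbinom q l i)⁻¹ * q ^ ((i : ℤ) * ((l : ℤ) - (i : ℤ))) * hwt q i A) • hv q l i := by
  funext ε
  simp only [proj, Matrix.sum_apply, rankOne, Matrix.of_apply, Pi.smul_apply, smul_eq_mul]
  rw [Finset.sum_congr rfl fun n _ => by rw [cv_indFun], hA]
  rw [Finset.sum_eq_single i ?_ ?_]
  · rw [if_pos rfl]; ring
  · intro n _ hn
    rw [if_neg fun h => hn h.symm, mul_zero]
  · intro h
    exact absurd (Finset.mem_range.mpr (Nat.lt_succ_of_le hi)) h
lemma qz (η : ℂ) (t : ℤ) : Complex.exp η ^ t = Complex.exp (η * t) := by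
  rw [mul_comm, Complex.exp_int_mul]

lemma qden_ne {η : ℂ} {l : ℕ}
    (hroot : ∀ m : ℕ, 1 ≤ m → m ≤ l → Complex.exp η ^ (2 * m) ≠ 1) (hl : 1 ≤ l) :
    Complex.exp η - (Complex.exp η)⁻¹ ≠ 0 := by
  set q := Complex.exp η with hq
  have hq0 : q ≠ 0 := Complex.exp_ne_zero η
  intro h
  apply hroot 1 le_rfl hl
  have he : q = q⁻¹ := sub_eq_zero.mp h
  calc q ^ (2 * 1) = q * q := by ring
    _ = q * q⁻¹ := by rw [← he]
    _ = 1 := mul_inv_cancel₀ hq0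

lemma qint_ne {η : ℂ} {l : ℕ}
    (hroot : ∀ m : ℕ, 1 ≤ m → m ≤ l → Complex.exp η ^ (2 * m) ≠ 1) (hl : 1 ≤ l)
    {m : ℕ} (h1 : 1 ≤ m) (h2 : m ≤ l) : qint (Complex.exp η) m ≠ 0 := by
  set q := Complex.exp η with hq
  have hq0 : q ≠ 0 := Complex.exp_ne_zero η
  have hnum : q ^ (m : ℤ) - q ^ (-(m : ℤ)) ≠ 0 := by
    intro h
    apply hroot m h1 h2
    have he : q ^ (m : ℤ) = q ^ (-(m : ℤ)) := sub_eq_zero.mp h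
    have h2' : q ^ (m : ℤ) * q ^ ((m : ℤ)) = q ^ (-(m : ℤ)) * q ^ ((m : ℤ)) := by rw [he]
    rw [← zpow_add₀ hq0, ← zpow_add₀ hq0, neg_add_cancel, zpow_zero] at h2'
    calc q ^ (2 * m) = q ^ ((m : ℤ) + (m : ℤ)) := by
          rw [← zpow_natCast]; congr 1; push_cast; ring
      _ = 1 := h2'
  exact div_ne_zero hnum (qden_ne hroot hl)

lemma qfact_ne {η : ℂ} {l : ℕ}
    (hroot : ∀ m : ℕ, 1 ≤ m → m ≤ l → Complex.exp η ^ (2 * m) ≠ 1) (hl : 1 ≤ l)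
    {n : ℕ} (hn : n ≤ l) : qfact (Complex.exp η) n ≠ 0 := by
  unfold qfact
  apply Finset.prod_ne_zero_iff.mpr
  intro m hm
  exact qint_ne hroot hl (Nat.le_add_left 1 m)
    (Nat.succ_le_of_lt (lt_of_lt_of_le (Finset.mem_range.mp hm) hn))

lemma qbinom_ne {η : ℂ} {l : ℕ}
    (hroot : ∀ m : ℕ, 1 ≤ m → m ≤ l → Complex.exp η ^ (2 * m) ≠ 1) (hl : 1 ≤ l)
    {n : ℕ} (hn : n ≤ l) : qbinom (Complex.exp η) l n ≠ 0 :=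
  div_ne_zero (qfact_ne hroot hl le_rfl)
    (mul_ne_zero (qfact_ne hroot hl (Nat.sub_le l n)) (qfact_ne hroot hl hn))

lemma siteSum_cast {l : ℕ} (C : Finset (Fin l)) :
    ((siteSum C : ℤ) : ℂ) = (∑ a ∈ C, (a.val : ℂ)) + C.card := by
  unfold siteSum
  push_cast
  rw [Finset.sum_add_distrib]
  simp

lemma exp_sum_w (ℓ Ns : ℕ) (η : ℂ) (ξ : Fin Ns → ℂ) (k : Fin Ns) (C : Finset (Fin ℓ)) :
    Complex.exp (∑ a ∈ C, wstring ℓ Ns η ξ (k, a))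
      = Complex.exp ((C.card : ℂ) * ξ k) *
          Complex.exp η ^ (-(siteSum C - (C.card : ℤ))) := by
  rw [qz, ← Complex.exp_add]
  congr 1
  unfold wstring
  simp only
  rw [Finset.sum_sub_distrib, Finset.sum_const, nsmul_eq_mul, ← Finset.sum_mul]
  have h := siteSum_cast C
  push_cast at h ⊢
  rw [show (∑ a ∈ C, (a.val : ℂ)) = (siteSum C : ℂ) - C.card from by rw [h]; ring]
  ring
set_option maxHeartbeats 2000000

/-- Reduction of the general spin-`ℓ/2` elementary operator at site `k`
of the blocked chain of `N_s` blocks of `ℓ` spin-1/2 sites: for every fixed `A` with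
`|A| = i`,
`Ê_k^{i,j(ℓ p)} = N̂_{i,j} e^{−(i−j)Λ_k} P^{(ℓ)}_{[k]}
  Σ_{|B|=j} χ_{1…L} (|1_A⟩⟨1_B| on block k) χ_{1…L}^{−1}`,
with `Λ_k = ξ_k − (ℓ−1)η/2` and `χ_{1…L} = ⊗_m diag(1, e^{w^{(ℓ)}_m})`. -/
theorem reduction_general_elementary (ℓ Ns : ℕ) (hl : 1 ≤ ℓ) (hNs : 1 ≤ Ns)
    (η : ℂ) (ξ : Fin Ns → ℂ)
    (hroot : ∀ m : ℕ, 1 ≤ m → m ≤ ℓ → Complex.exp η ^ (2 * m) ≠ 1)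
    (g : ℕ → ℂ) (hg : ∀ n, n ≤ ℓ → g n ≠ 0)
    (k : Fin Ns) (i j : ℕ) (hi : i ≤ ℓ) (hj : j ≤ ℓ)
    (A : Finset (Fin ℓ)) (hA : A.card = i) :
    embed k ((g j / g i) •
        rankOne (hv (Complex.exp η) ℓ i) (cv (Complex.exp η) ℓ j))
      = (Nhat (Complex.exp η) η g ℓ i j *
          Complex.exp (-(((i : ℂ) - (j : ℂ)) * (ξ k - ((ℓ : ℂ) - 1) * η / 2)))) •
        (embed k (proj (Complex.exp η) ℓ) *
          ∑ B ∈ Finset.powersetCard j (Finset.univ : Finset (Fin ℓ)),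
            gaugeM (wstring ℓ Ns η ξ) * embed k (rankOne (bvec A) (bvec B)) *
              (gaugeM (wstring ℓ Ns η ξ))⁻¹) := by
  set q := Complex.exp η with hq
  have hq0 : q ≠ 0 := Complex.exp_ne_zero η
  set w := wstring ℓ Ns η ξ with hw
  set N : ℂ := Nhat q η g ℓ i j *
    Complex.exp (-(((i : ℂ) - (j : ℂ)) * (ξ k - ((ℓ : ℂ) - 1) * η / 2))) with hN
  set κA : ℂ := (qbinom q ℓ i)⁻¹ * q ^ ((i : ℤ) * ((ℓ : ℤ) - (i : ℤ))) * hwt q i A with hκA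
  set D : ℂ := Complex.exp (∑ a ∈ A, w (k, a)) * Complex.exp (-((j : ℂ) * ξ k)) *
    q ^ ((j : ℤ) * (ℓ : ℤ) - (j : ℤ) * ((j : ℤ) - 1) / 2 - (j : ℤ)) * κA with hD
  set κj : ℂ := (qbinom q ℓ j)⁻¹ * q ^ ((j : ℤ) * ((ℓ : ℤ) - (j : ℤ))) with hκj
  have hκj0 : κj ≠ 0 := by
    apply mul_ne_zero (inv_ne_zero (qbinom_ne hroot hl hj)) (zpow_ne_zero _ hq0)
  -- Step 1: gauge conjugation inside the sum
  rw [Finset.sum_congr rfl (fun B _ => gauge_conj k w A B)]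
  -- Step 2: multiply through by the projector, block by block
  rw [Finset.mul_sum]
  have hcol := proj_col q i hi A hA
  rw [Finset.sum_congr rfl (fun B _ => by
    rw [mul_smul_comm, embed_mul, mul_rankOne_bvec, hcol, rankOne_smul_left,
      embed_smul, smul_smul])]
  -- Step 3: rewrite the coefficients
  have hcoef : ∀ B ∈ Finset.powersetCard j (Finset.univ : Finset (Fin ℓ)),
      (Complex.exp ((∑ a ∈ A, w (k, a)) - ∑ b ∈ B, w (k, b)) * κA) •
          embed k (rankOne (hv q ℓ i) (bvec B))
        = (D * hwt q j B) • embed k (rankOne (hv q ℓ i) (bvec B)) := by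
    intro B hB
    have hBcard : B.card = j := Finset.mem_powersetCard_univ.mp hB
    have h1 : Complex.exp (∑ b ∈ B, w (k, b))
        = Complex.exp ((j : ℂ) * ξ k) * q ^ (-(siteSum B - (j : ℤ))) := by
      have := exp_sum_w ℓ Ns η ξ k B
      rw [hBcard] at this
      exact this
    have hz2 : (q : ℂ) ^ (siteSum B - (j : ℤ))
        = q ^ ((j : ℤ) * (ℓ : ℤ) - (j : ℤ) * ((j : ℤ) - 1) / 2 - (j : ℤ)) *
          q ^ (siteSum B - (j : ℤ) * (ℓ : ℤ) + (j : ℤ) * ((j : ℤ) - 1) / 2) := by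
      rw [← zpow_add₀ hq0]; congr 1; ring
    congr 1
    rw [Complex.exp_sub, h1, hD]
    unfold hwt
    rw [div_eq_mul_inv, mul_inv, ← Complex.exp_neg, zpow_neg, inv_inv, hz2]
    ring
  rw [Finset.sum_congr rfl hcoef]
  -- Step 4: resum into the covector
  have hcv : (∑ B ∈ Finset.powersetCard j (Finset.univ : Finset (Fin ℓ)),
      hwt q j B • bvec B) = κj⁻¹ • cv q ℓ j := by
    rw [show cv q ℓ j = κj • ∑ B ∈ Finset.powersetCard j (Finset.univ : Finset (Fin ℓ)),
      hwt q j B • bvec B from rfl, smul_smul, inv_mul_cancel₀ hκj0, one_smul]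
  have hsum2 : (∑ B ∈ Finset.powersetCard j (Finset.univ : Finset (Fin ℓ)),
      (D * hwt q j B) • embed k (rankOne (hv q ℓ i) (bvec B)))
      = (D * κj⁻¹) • embed k (rankOne (hv q ℓ i) (cv q ℓ j)) := by
    calc (∑ B ∈ Finset.powersetCard j (Finset.univ : Finset (Fin ℓ)),
        (D * hwt q j B) • embed k (rankOne (hv q ℓ i) (bvec B)))
        = D • ∑ B ∈ Finset.powersetCard j (Finset.univ : Finset (Fin ℓ)),
            embed k (hwt q j B • rankOne (hv q ℓ i) (bvec B)) := by
          rw [Finset.smul_sum]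
          exact Finset.sum_congr rfl fun B _ => by rw [embed_smul, smul_smul]
      _ = D • embed k (rankOne (hv q ℓ i)
            (∑ B ∈ Finset.powersetCard j (Finset.univ : Finset (Fin ℓ)),
              hwt q j B • bvec B)) := by
          have hinner : (∑ B ∈ Finset.powersetCard j (Finset.univ : Finset (Fin ℓ)),
              hwt q j B • rankOne (hv q ℓ i) (bvec B))
              = rankOne (hv q ℓ i)
                (∑ B ∈ Finset.powersetCard j (Finset.univ : Finset (Fin ℓ)),
                  hwt q j B • bvec B) := by
            rw [rankOne_sum_right]
            exact Finset.sum_congr rfl fun B _ => (rankOne_smul_right _ _ _).symm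
          rw [← embed_sum, hinner]
      _ = (D * κj⁻¹) • embed k (rankOne (hv q ℓ i) (cv q ℓ j)) := by
          rw [hcv, rankOne_smul_right, embed_smul, smul_smul]
  rw [hsum2, smul_smul, embed_smul]
  have hscal : N * (D * κj⁻¹) = g j / g i := by
    have hexpA : Complex.exp (∑ a ∈ A, w (k, a))
        = Complex.exp ((i : ℂ) * ξ k) * q ^ (-(siteSum A - (i : ℤ))) := by
      have h := exp_sum_w ℓ Ns η ξ k A
      rw [hA] at h
      exact h
    have hQi : qbinom q ℓ i ≠ 0 := qbinom_ne hroot hl hi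
    have hQj : qbinom q ℓ j ≠ 0 := qbinom_ne hroot hl hj
    have hgi : g i ≠ 0 := hg i hi
    have hgj : g j ≠ 0 := hg j hj
    rw [hN, hD, hκA, hκj, hexpA]
    unfold Nhat Fnorm hwt
    rw [hq]
    simp only [qz]
    field_simp
    have h2i : ((((i : ℤ) * ((i : ℤ) - 1) / 2 : ℤ) : ℂ)) * 2 = (i : ℂ) * ((i : ℂ) - 1) := by
      have hd : (2 : ℤ) ∣ (i : ℤ) * ((i : ℤ) - 1) := by
        rcases Int.even_or_odd (i : ℤ) with h | h
        · exact Dvd.dvd.mul_right h.two_dvd _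
        · exact Dvd.dvd.mul_left ((h.sub_odd odd_one).two_dvd) _
      calc ((((i : ℤ) * ((i : ℤ) - 1) / 2 : ℤ) : ℂ)) * 2
          = ((((i : ℤ) * ((i : ℤ) - 1) / 2 * 2 : ℤ) : ℂ)) := by push_cast; ring
        _ = _ := by rw [Int.ediv_mul_cancel hd]; push_cast; ring
    have h2j : ((((j : ℤ) * ((j : ℤ) - 1) / 2 : ℤ) : ℂ)) * 2 = (j : ℂ) * ((j : ℂ) - 1) := by
      have hd : (2 : ℤ) ∣ (j : ℤ) * ((j : ℤ) - 1) := by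
        rcases Int.even_or_odd (j : ℤ) with h | h
        · exact Dvd.dvd.mul_right h.two_dvd _
        · exact Dvd.dvd.mul_left ((h.sub_odd odd_one).two_dvd) _
      calc ((((j : ℤ) * ((j : ℤ) - 1) / 2 : ℤ) : ℂ)) * 2
          = ((((j : ℤ) * ((j : ℤ) - 1) / 2 * 2 : ℤ) : ℂ)) := by push_cast; ring
        _ = _ := by rw [Int.ediv_mul_cancel hd]; push_cast; ring
    have hE : Complex.exp (-(η * ((i : ℂ) * ((ℓ : ℂ) - (i : ℂ)))))
        * Complex.exp (η * ((i : ℂ) * ((ℓ : ℂ) - (i : ℂ)) - (j : ℂ) * ((ℓ : ℂ) - (j : ℂ))) / 2)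
        * Complex.exp (-(((i : ℂ) - (j : ℂ)) * (ξ k * 2 - ((ℓ : ℂ) - 1) * η)) / 2)
        * Complex.exp ((i : ℂ) * ξ k)
        * Complex.exp (η * ((i : ℂ) - ((siteSum A : ℤ) : ℂ)))
        * Complex.exp (-((j : ℂ) * ξ k))
        * Complex.exp (η * ((j : ℂ) * (ℓ : ℂ) - (((j : ℤ) * ((j : ℤ) - 1) / 2 : ℤ) : ℂ) - (j : ℂ)))
        * Complex.exp (η * ((i : ℂ) * ((ℓ : ℂ) - (i : ℂ))))
        * Complex.exp (η * (((siteSum A : ℤ) : ℂ) - (i : ℂ) * (ℓ : ℂ) + (((i : ℤ) * ((i : ℤ) - 1) / 2 : ℤ) : ℂ)))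
        = Complex.exp (-(η * ((j : ℂ) * ((ℓ : ℂ) - (j : ℂ)))))
          * Complex.exp (η * ((j : ℂ) * ((ℓ : ℂ) - (j : ℂ)))) := by
      simp only [← Complex.exp_add]
      congr 1
      linear_combination (η / 2) * h2i - (η / 2) * h2j
    have h1 := mul_inv_cancel₀ hQi
    have h2 := mul_inv_cancel₀ hQj
    rw [hq] at h1 h2
    have hQ : qbinom (Complex.exp η) ℓ i * qbinom (Complex.exp η) ℓ j * (qbinom (Complex.exp η) ℓ i)⁻¹ * (qbinom (Complex.exp η) ℓ j)⁻¹ = 1 := by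
      linear_combination (qbinom (Complex.exp η) ℓ j * (qbinom (Complex.exp η) ℓ j)⁻¹) * h1 + h2
    push_cast at hE ⊢
    ring_nf at hE ⊢
    rw [hE]
    simp only [mul_assoc] at hQ ⊢
    rw [hQ, mul_one]
  rw [hscal]
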